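/- arXiv:2505.09988 — 3 statements merged into one kernel-verified Lean document; each statement's English description precedes it below -/
import Mathlib

section
/- Let ζ' > 0, τ' ≥ 0, β > 0, v ≥ 0, v_L ≥ 0, β_L > 0, and suppose z ≥ max(ζ', Φ'(v, v_L)) where Φ'(v, v_L) = ζ' - v_L²/(2β_L) + v·τ'/2 + v²/(2β). Define the projected braking distance B̃ = z - Φ'(v, v_L) + v²/(2β) and the comfort-braking acceleration a = -v²/(2B̃) (with a = 0 when v = 0). Then -β ≤ a ≤ 0. -/
theorem stmt_9 (ζ' τ' β β_L v v_L z : ℝ) (hζ' : 0 < ζ') (hτ : 0 ≤ τ') (hβ : 0 < β)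
    (hβL : 0 < β_L) (hv : 0 ≤ v) (hvL : 0 ≤ v_L)
    (hz : max ζ' (ζ' - v_L ^ 2 / (2 * β_L) + v * (τ' / 2) + v ^ 2 / (2 * β)) ≤ z) :
    -β ≤ (if v = 0 then (0:ℝ) else
        -v ^ 2 / (2 * (z - (ζ' - v_L ^ 2 / (2 * β_L) + v * (τ' / 2) + v ^ 2 / (2 * β))
          + v ^ 2 / (2 * β)))) ∧
    (if v = 0 then (0:ℝ) else
        -v ^ 2 / (2 * (z - (ζ' - v_L ^ 2 / (2 * β_L) + v * (τ' / 2) + v ^ 2 / (2 * β))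
          + v ^ 2 / (2 * β)))) ≤ 0 := by
  by_cases h : v = 0
  · simp [h]; positivity
  · simp only [if_neg h]
    have hΦ : ζ' - v_L ^ 2 / (2 * β_L) + v * (τ' / 2) + v ^ 2 / (2 * β) ≤ z :=
      le_trans (le_max_right _ _) hz
    set B := z - (ζ' - v_L ^ 2 / (2 * β_L) + v * (τ' / 2) + v ^ 2 / (2 * β)) + v ^ 2 / (2 * β)
      with hB
    have hv2 : 0 < v ^ 2 := by positivity
    have hBlb : v ^ 2 / (2 * β) ≤ B := by
      have : 0 ≤ z - (ζ' - v_L ^ 2 / (2 * β_L) + v * (τ' / 2) + v ^ 2 / (2 * β)) := by linarith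
      linarith
    have hBpos : 0 < B := lt_of_lt_of_le (by positivity) hBlb
    constructor
    · rw [neg_le, ← neg_div, neg_neg, div_le_iff₀ (by positivity)]
      have key : v ^ 2 ≤ B * (2 * β) := (div_le_iff₀ (by positivity)).mp hBlb
      nlinarith
    · apply div_nonpos_of_nonpos_of_nonneg <;> nlinarith
end

section
/- Let τ' > 0 and C > 0. For the solution v(t) of v' = -v/(τ' + C v) with v(0) = v₀ > 0, the jerk da/dt along the trajectory equals τ'·v / (τ' + C v)³, which is strictly positive whenever v > 0; hence the acceleration a(t) = -v(t)/(τ' + C v(t)) is strictly increasing in time (deceleration magnitude monotonically decreases). -/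
theorem stmt_12 (τ' C v0 : ℝ) (hτ : 0 < τ') (hC : 0 < C) (hv0 : 0 < v0)
    (v : ℝ → ℝ) (hinit : v 0 = v0)
    (hode : ∀ t ≥ (0:ℝ), HasDerivAt v (-(v t) / (τ' + C * v t)) t)
    (hpos : ∀ t ≥ (0:ℝ), 0 < v t) :
    (∀ t ≥ (0:ℝ),
      HasDerivAt (fun s => -(v s) / (τ' + C * v s))
        (τ' * v t / (τ' + C * v t) ^ 3) t ∧
      0 < τ' * v t / (τ' + C * v t) ^ 3) ∧
    StrictMonoOn (fun s => -(v s) / (τ' + C * v s)) (Set.Ici 0) := by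
  have hden : ∀ t ≥ (0:ℝ), 0 < τ' + C * v t := by
    intro t ht
    have := hpos t ht
    positivity
  have key : ∀ t ≥ (0:ℝ),
      HasDerivAt (fun s => -(v s) / (τ' + C * v s))
        (τ' * v t / (τ' + C * v t) ^ 3) t := by
    intro t ht
    have hv := hode t ht
    have hd := (hden t ht).ne'
    have h1 : HasDerivAt (fun s => -(v s)) (-(-(v t) / (τ' + C * v t))) t := hv.neg
    have h2 : HasDerivAt (fun s => τ' + C * v s)
        (C * (-(v t) / (τ' + C * v t))) t :=
      (hv.const_mul C).const_add τ'
    have h3 : HasDerivAt (fun s => -(v s) / (τ' + C * v s)) _ t := h1.div h2 hd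
    convert h3 using 1
    field_simp
    ring
  refine ⟨fun t ht => ⟨key t ht, by have := hpos t ht; have := hden t ht; positivity⟩, ?_⟩
  apply StrictMonoOn.mono (s := Set.Ici 0) ?_ (le_refl _)
  apply strictMonoOn_of_deriv_pos (convex_Ici 0)
  · intro t ht
    exact ((key t ht).continuousAt).continuousWithinAt
  · intro t ht
    rw [interior_Ici] at ht
    have ht' : (0:ℝ) ≤ t := le_of_lt ht
    rw [(key t ht').deriv]
    have := hpos t ht'
    have := hden t ht'
    positivity
end

section
/- Let β_L > 0, β > β_L, τ' ≥ 0, v ≥ 0, v_L ≥ 0 with τ' + v/β ≥ v_L/β_L and v ≥ v_L. Then the follower's projected braking speed profile u(s) (constant v on [0, τ'], then decreasing at rate β to zero) pointwise dominates the leader's profile u_L(s) = max(0, v_L - β_L s) for all s ≥ 0; hence the projected spacing is non-increasing in s and its infimum over s ≥ 0 equals the projected stopping spacing z̃ = z - vτ' + v_L²/(2β_L) - v²/(2β) ≤ z. -/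
lemma stmt_16_split {f : ℝ → ℝ} {a b c : ℝ}
    (h1 : IntervalIntegrable f MeasureTheory.volume a b)
    (h2 : IntervalIntegrable f MeasureTheory.volume b c) :
    (∫ x in a..c, f x) = (∫ x in a..b, f x) + ∫ x in b..c, f x :=
  (intervalIntegral.integral_add_adjacent_intervals h1 h2).symm

theorem stmt_16 (β β_L τ' v v_L z : ℝ) (hβL : 0 < β_L) (hβ : β_L < β)
    (hτ : 0 ≤ τ') (hvL : 0 ≤ v_L) (hv : v_L ≤ v)
    (hstop : v_L / β_L ≤ τ' + v / β) :
    (∀ s ≥ (0:ℝ),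
      max 0 (v_L - β_L * s) ≤ (if s ≤ τ' then v else max 0 (v - β * (s - τ')))) ∧
    AntitoneOn
      (fun s => z + ∫ r in (0:ℝ)..s,
        (max 0 (v_L - β_L * r) - (if r ≤ τ' then v else max 0 (v - β * (r - τ')))))
      (Set.Ici 0) ∧
    Filter.Tendsto
      (fun s => z + ∫ r in (0:ℝ)..s,
        (max 0 (v_L - β_L * r) - (if r ≤ τ' then v else max 0 (v - β * (r - τ')))))
      Filter.atTop
      (nhds (z - v * τ' + v_L ^ 2 / (2 * β_L) - v ^ 2 / (2 * β))) ∧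
    (∀ s ≥ (0:ℝ),
      z - v * τ' + v_L ^ 2 / (2 * β_L) - v ^ 2 / (2 * β) ≤
        z + ∫ r in (0:ℝ)..s,
          (max 0 (v_L - β_L * r) - (if r ≤ τ' then v else max 0 (v - β * (r - τ'))))) ∧
    z - v * τ' + v_L ^ 2 / (2 * β_L) - v ^ 2 / (2 * β) ≤ z := by
  have hβ0 : (0:ℝ) < β := hβL.trans hβ
  have hv0 : (0:ℝ) ≤ v := hvL.trans hv
  have hIf : ∀ r : ℝ, (if r ≤ τ' then v else max 0 (v - β * (r - τ'))) =
      max 0 (v - β * max 0 (r - τ')) := by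
    intro r
    by_cases h : r ≤ τ'
    · have i1 : (0:ℝ) ⊔ (r - τ') = 0 := max_eq_left (by linarith)
      rw [if_pos h, i1, mul_zero, sub_zero, max_eq_right hv0]
    · have i1 : (0:ℝ) ⊔ (r - τ') = r - τ' := max_eq_right (by push_neg at h; linarith)
      rw [if_neg h, i1]
  simp only [hIf]
  set f : ℝ → ℝ := fun r => max 0 (v_L - β_L * r) - max 0 (v - β * max 0 (r - τ'))
    with hf
  have h3 : v_L * β ≤ β_L * τ' * β + β_L * v := by
    have h1 : v_L ≤ (τ' + v / β) * β_L := (div_le_iff₀ hβL).mp hstop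
    have h2 : (τ' + v / β) * β_L * β = β_L * τ' * β + β_L * v := by field_simp
    nlinarith [mul_le_mul_of_nonneg_right h1 hβ0.le]
  -- pointwise domination
  have hpt : ∀ s ≥ (0:ℝ), max 0 (v_L - β_L * s) ≤ max 0 (v - β * max 0 (s - τ')) := by
    intro s hs
    rcases le_or_gt (v_L - β_L * s) 0 with h | h
    · rw [max_eq_left h]; exact le_max_left _ _
    · refine le_trans ?_ (le_max_right _ _)
      rw [max_eq_right h.le]
      rcases le_or_gt s τ' with h1 | h1
      · have i1 : (0:ℝ) ⊔ (s - τ') = 0 := max_eq_left (by linarith)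
        rw [i1, mul_zero]
        nlinarith
      · have i1 : (0:ℝ) ⊔ (s - τ') = s - τ' := max_eq_right (by linarith)
        rw [i1]
        nlinarith [mul_nonneg (sub_nonneg.2 hβ.le) h.le]
  have hfn : ∀ s ≥ (0:ℝ), f s ≤ 0 := fun s hs => sub_nonpos.2 (hpt s hs)
  have hcf : Continuous f := by fun_prop
  have hint : ∀ a b : ℝ, IntervalIntegrable f MeasureTheory.volume a b :=
    fun a b => hcf.intervalIntegrable a b
  have hcgL : Continuous fun r : ℝ => max 0 (v_L - β_L * r) := by fun_prop
  have hcg : Continuous fun r : ℝ => max 0 (v - β * max 0 (r - τ')) := by fun_prop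
  -- antitone
  have hanti : AntitoneOn (fun s => z + ∫ r in (0:ℝ)..s, f r) (Set.Ici 0) := by
    intro a ha b hb hab
    simp only
    have hsplit := stmt_16_split (hint 0 a) (hint a b)
    have hle : (∫ r in a..b, f r) ≤ 0 := by
      have h0 : 0 ≤ ∫ r in a..b, -(f r) :=
        intervalIntegral.integral_nonneg hab fun u hu => neg_nonneg.2 (hfn u (le_trans ha hu.1))
      rw [intervalIntegral.integral_neg] at h0
      linarith
    rw [hsplit]; linarith
  have hT0 : (0:ℝ) ≤ τ' + v / β := by positivity
  have hτT : τ' ≤ τ' + v / β := by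
    have : (0:ℝ) ≤ v / β := by positivity
    linarith
  have hTL0 : (0:ℝ) ≤ v_L / β_L := by positivity
  have hgLv : β_L * (v_L / β_L) = v_L := by field_simp
  have hgv : β * (τ' + v / β) = β * τ' + v := by field_simp
  set T : ℝ := τ' + v / β with hT
  have hgL : (∫ r in (0:ℝ)..T, max 0 (v_L - β_L * r)) = v_L ^ 2 / (2 * β_L) := by
    rw [stmt_16_split (hcgL.intervalIntegrable 0 (v_L / β_L)) (hcgL.intervalIntegrable (v_L / β_L) T)]
    have e1 : (∫ r in (0:ℝ)..(v_L / β_L), max 0 (v_L - β_L * r))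
        = ∫ r in (0:ℝ)..(v_L / β_L), (v_L - β_L * r) := by
      apply intervalIntegral.integral_congr
      intro r hr
      rw [Set.uIcc_of_le hTL0] at hr
      have h1 : β_L * r ≤ β_L * (v_L / β_L) := mul_le_mul_of_nonneg_left hr.2 hβL.le
      show (0:ℝ) ⊔ (v_L - β_L * r) = v_L - β_L * r
      exact max_eq_right (by linarith)
    have e2 : (∫ r in (v_L / β_L)..T, max 0 (v_L - β_L * r)) = ∫ r in (v_L / β_L)..T, (0:ℝ) := by
      apply intervalIntegral.integral_congr
      intro r hr
      rw [Set.uIcc_of_le hstop] at hr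
      have h1 : β_L * (v_L / β_L) ≤ β_L * r := mul_le_mul_of_nonneg_left hr.1 hβL.le
      show (0:ℝ) ⊔ (v_L - β_L * r) = 0
      exact max_eq_left (by linarith)
    rw [e1, e2, intervalIntegral.integral_zero, add_zero,
      intervalIntegral.integral_sub intervalIntegrable_const
        ((by fun_prop : Continuous fun r : ℝ => β_L * r).intervalIntegrable _ _),
      intervalIntegral.integral_const_mul, integral_id,
      intervalIntegral.integral_const, smul_eq_mul]
    field_simp
    ring
  have hg : (∫ r in (0:ℝ)..T, max 0 (v - β * max 0 (r - τ'))) = v * τ' + v ^ 2 / (2 * β) := by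
    rw [stmt_16_split (hcg.intervalIntegrable 0 τ') (hcg.intervalIntegrable τ' T)]
    have e1 : (∫ r in (0:ℝ)..τ', max 0 (v - β * max 0 (r - τ'))) = ∫ r in (0:ℝ)..τ', v := by
      apply intervalIntegral.integral_congr
      intro r hr
      rw [Set.uIcc_of_le hτ] at hr
      show (0:ℝ) ⊔ (v - β * ((0:ℝ) ⊔ (r - τ'))) = v
      have i1 : (0:ℝ) ⊔ (r - τ') = 0 := max_eq_left (by linarith [hr.2])
      rw [i1, mul_zero, sub_zero]
      exact max_eq_right hv0
    have e2 : (∫ r in τ'..T, max 0 (v - β * max 0 (r - τ'))) =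
        ∫ r in τ'..T, ((v + β * τ') - β * r) := by
      apply intervalIntegral.integral_congr
      intro r hr
      rw [Set.uIcc_of_le hτT] at hr
      show (0:ℝ) ⊔ (v - β * ((0:ℝ) ⊔ (r - τ'))) = v + β * τ' - β * r
      have i1 : (0:ℝ) ⊔ (r - τ') = r - τ' := max_eq_right (by linarith [hr.1])
      have h4 : β * r ≤ β * T := mul_le_mul_of_nonneg_left hr.2 hβ0.le
      rw [i1, max_eq_right (by nlinarith [hgv])]
      ring
    rw [e1, e2,
      intervalIntegral.integral_sub intervalIntegrable_const
        ((by fun_prop : Continuous fun r : ℝ => β * r).intervalIntegrable _ _),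
      intervalIntegral.integral_const_mul, integral_id,
      intervalIntegral.integral_const, intervalIntegral.integral_const, smul_eq_mul, smul_eq_mul,
      hT]
    field_simp
    ring
  have hvalT : (∫ r in (0:ℝ)..T, f r) = v_L ^ 2 / (2 * β_L) - (v * τ' + v ^ 2 / (2 * β)) := by
    rw [hf, intervalIntegral.integral_sub (hcgL.intervalIntegrable _ _)
      (hcg.intervalIntegrable _ _), hgL, hg]
  have hval : ∀ s, T ≤ s →
      (∫ r in (0:ℝ)..s, f r) = v_L ^ 2 / (2 * β_L) - (v * τ' + v ^ 2 / (2 * β)) := by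
    intro s hsT
    rw [stmt_16_split (hint 0 T) (hint T s), hvalT]
    have e0 : (∫ r in T..s, f r) = ∫ r in T..s, (0:ℝ) := by
      apply intervalIntegral.integral_congr
      intro r hr
      rw [Set.uIcc_of_le hsT] at hr
      have hrT : T ≤ r := hr.1
      show (0:ℝ) ⊔ (v_L - β_L * r) - (0:ℝ) ⊔ (v - β * ((0:ℝ) ⊔ (r - τ'))) = 0
      have h1 : β_L * (v_L / β_L) ≤ β_L * r :=
        mul_le_mul_of_nonneg_left (hstop.trans hrT) hβL.le
      have h4 : β * T ≤ β * r := mul_le_mul_of_nonneg_left hrT hβ0.le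
      have i1 : (0:ℝ) ⊔ (v_L - β_L * r) = 0 := max_eq_left (by linarith)
      have i2 : (0:ℝ) ⊔ (r - τ') = r - τ' := max_eq_right (by linarith [hτT.trans hrT])
      rw [i1, i2, max_eq_left (by nlinarith [hgv]), sub_self]
    rw [e0, intervalIntegral.integral_zero, add_zero]
  refine ⟨fun s hs => hpt s hs, hanti, ?_, ?_, ?_⟩
  · apply Filter.Tendsto.congr' _ tendsto_const_nhds
    filter_upwards [Filter.eventually_ge_atTop T] with s hs
    rw [hval s hs]; ring
  · intro s hs
    rcases le_or_gt T s with h | h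
    · rw [hval s h]; linarith
    · have h2 := hanti hs (Set.mem_Ici.mpr hT0) h.le
      simp only at h2
      rw [hvalT] at h2
      linarith
  · have h0 : (∫ r in (0:ℝ)..(0:ℝ), f r) = 0 := intervalIntegral.integral_same
    have h2 := hanti (Set.mem_Ici.mpr le_rfl) (Set.mem_Ici.mpr hT0) hT0
    simp only [h0] at h2
    rw [hvalT] at h2
    linarith
end
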